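/- For each integer n ≥ 1, f_1(n) = n; that is, any family F ⊆ S_n with d_U(α, β) ≤ 1 for all α, β ∈ F has |F| ≤ n, and some such family of size n exists. -/

import Mathlib

open Equiv

def ulamDel {n : ℕ} (σ : Equiv.Perm (Fin n)) (A : Finset (Fin n)) : List (Fin n) :=
  (List.ofFn fun i => σ i).filter (fun x => decide (x ∉ A))

noncomputable def ulamDist {n : ℕ} (α β : Equiv.Perm (Fin n)) : ℕ :=
  sInf {m | ∃ A : Finset (Fin n), A.card = m ∧ ulamDel α A = ulamDel β A}

noncomputable def maxDiamFamily (n k : ℕ) : ℕ :=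
  sSup {m | ∃ F : Finset (Equiv.Perm (Fin n)), F.card = m ∧
    ∀ α ∈ F, ∀ β ∈ F, ulamDist α β ≤ k}

namespace UlamAux

variable {n : ℕ}

/-- `u` (thought of as `β⁻¹`) is monotone off the symbol `a`. -/
def Tw (u : Perm (Fin n)) (a : Fin n) : Prop :=
  ∀ ⦃x y : Fin n⦄, x ≠ a → y ≠ a → x < y → u x < u y

/-- `u` and `v` induce the same relative order off the symbol `c`. -/
def Mw (u v : Perm (Fin n)) (c : Fin n) : Prop :=
  ∀ ⦃x y : Fin n⦄, x ≠ c → y ≠ c → x < y → (u x < u y ↔ v x < v y)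

lemma exists_le_apply (h : Fin n → Fin n) (hinj : Function.Injective h) (x : Fin n) :
    ∃ y, y ≤ x ∧ x ≤ h y := by
  by_contra hc
  push_neg at hc
  have hsub : (Finset.Iic x).image h ⊆ Finset.Iio x := by
    intro z hz
    rcases Finset.mem_image.1 hz with ⟨y, hy, rfl⟩
    exact Finset.mem_Iio.2 (hc y (Finset.mem_Iic.1 hy))
  have h1 : (Finset.Iic x).card ≤ (Finset.Iio x).card := by
    rw [← Finset.card_image_of_injective _ hinj]
    exact Finset.card_le_card hsub
  have h2 : (Finset.Iio x).card < (Finset.Iic x).card := by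
    apply Finset.card_lt_card
    rw [Finset.ssubset_iff_of_subset Finset.Iio_subset_Iic_self]
    exact ⟨x, Finset.mem_Iic.2 le_rfl, by simp⟩
  omega

lemma le_apply_aux (g : Perm (Fin n)) (p : Fin n) (hp : g p = p)
    (hg : ∀ ⦃x y : Fin n⦄, x ≠ p → y ≠ p → x < y → g x < g y) : ∀ x, x ≤ g x := by
  intro x
  rcases eq_or_ne x p with rfl | hxp
  · rw [hp]
  obtain ⟨y, hyx, hxy⟩ := exists_le_apply g g.injective x
  rcases eq_or_lt_of_le hyx with rfl | hlt
  · exact hxy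
  rcases eq_or_ne y p with rfl | hyp
  · rw [hp] at hxy
    exact absurd (lt_of_le_of_lt hxy hlt) (lt_irrefl _)
  · exact le_of_lt (lt_of_le_of_lt hxy (hg hyp hxp hlt))

lemma symm_off (g : Perm (Fin n)) (p : Fin n) (hp : g p = p)
    (hg : ∀ ⦃x y : Fin n⦄, x ≠ p → y ≠ p → x < y → g x < g y) :
    ∀ ⦃x y : Fin n⦄, x ≠ p → y ≠ p → x < y → g.symm x < g.symm y := by
  intro x y hx hy hxy
  have hx' : g.symm x ≠ p := fun h => hx (by rw [← hp, ← h, Equiv.apply_symm_apply])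
  have hy' : g.symm y ≠ p := fun h => hy (by rw [← hp, ← h, Equiv.apply_symm_apply])
  rcases lt_trichotomy (g.symm x) (g.symm y) with h | h | h
  · exact h
  · exact absurd (g.symm.injective h) (ne_of_lt hxy)
  · have := hg hy' hx' h
    rw [Equiv.apply_symm_apply, Equiv.apply_symm_apply] at this
    exact absurd hxy (not_lt.2 (le_of_lt this))

lemma fixpoint_aux (g : Perm (Fin n)) (p : Fin n) (hp : g p = p)
    (hg : ∀ ⦃x y : Fin n⦄, x ≠ p → y ≠ p → x < y → g x < g y) : g = 1 := by
  have hsp : g.symm p = p := (Equiv.symm_apply_eq g).2 hp.symm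
  have h1 := le_apply_aux g p hp hg
  have h2 := le_apply_aux g.symm p hsp (symm_off g p hp hg)
  ext x
  have := h2 (g x)
  rw [Equiv.symm_apply_apply] at this
  exact le_antisymm this (h1 x)

lemma eq_one_of_no_inversion (u : Perm (Fin n))
    (h : ∀ ⦃x y : Fin n⦄, x < y → u x < u y) : u = 1 := by
  rcases Nat.eq_zero_or_pos n with rfl | hn
  · ext x; exact absurd x.2 (by omega)
  · have p : Fin n := ⟨0, hn⟩
    -- use fixpoint trick with p := u.symm applied? simpler: adapt le_apply
    have h1 : ∀ x, x ≤ u x := by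
      intro x
      obtain ⟨y, hyx, hxy⟩ := exists_le_apply u u.injective x
      rcases eq_or_lt_of_le hyx with rfl | hlt
      · exact hxy
      · exact le_of_lt (lt_of_le_of_lt hxy (h hlt))
    have hsymm : ∀ ⦃x y : Fin n⦄, x < y → u.symm x < u.symm y := by
      intro x y hxy
      rcases lt_trichotomy (u.symm x) (u.symm y) with hlt | he | hgt
      · exact hlt
      · exact absurd (u.symm.injective he) (ne_of_lt hxy)
      · have := h hgt
        rw [Equiv.apply_symm_apply, Equiv.apply_symm_apply] at this
        exact absurd hxy (not_lt.2 (le_of_lt this))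
    have h2 : ∀ x, x ≤ u.symm x := by
      intro x
      obtain ⟨y, hyx, hxy⟩ := exists_le_apply u.symm u.symm.injective x
      rcases eq_or_lt_of_le hyx with rfl | hlt
      · exact hxy
      · exact le_of_lt (lt_of_le_of_lt hxy (hsymm hlt))
    ext x
    have := h2 (u x)
    rw [Equiv.symm_apply_apply] at this
    exact le_antisymm this (h1 x)

lemma perm_apply_inv_self (u : Perm (Fin n)) (x : Fin n) : u (u⁻¹ x) = x :=
  u.apply_symm_apply x

lemma perm_inv_apply_self (u : Perm (Fin n)) (x : Fin n) : u⁻¹ (u x) = x :=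
  u.symm_apply_apply x

/-- A permutation is determined by its set of inversions. -/
lemma eq_of_same_order (u w : Perm (Fin n))
    (h : ∀ ⦃x y : Fin n⦄, x < y → (u x < u y ↔ w x < w y)) : u = w := by
  have key : w * u⁻¹ = 1 := by
    apply eq_one_of_no_inversion
    intro p q hpq
    have hxy : u⁻¹ p ≠ u⁻¹ q := fun hh => ne_of_lt hpq (by
      have := congrArg u hh; simpa using this)
    rcases lt_trichotomy (u⁻¹ p) (u⁻¹ q) with hlt | he | hgt
    · have := (h hlt).1 (by simpa using hpq)
      simpa [Equiv.Perm.mul_apply] using this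
    · exact absurd he hxy
    · have hiff := h hgt
      have hfalse : ¬ (u (u⁻¹ q) < u (u⁻¹ p)) := by
        simp only [perm_apply_inv_self]
        exact not_lt.2 (le_of_lt hpq)
      have hne : w (u⁻¹ p) ≠ w (u⁻¹ q) := fun hh => hxy (w.injective hh)
      have := mt hiff.2 hfalse
      have := lt_of_le_of_ne (not_lt.1 this) hne
      simpa [Equiv.Perm.mul_apply] using this
  have := mul_inv_eq_one.1 key
  exact this.symm

/-- Two permutations monotone off `a` agreeing at `a` are equal. -/
lemma T_inj {u w : Perm (Fin n)} {a : Fin n} (hu : Tw u a) (hw : Tw w a)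
    (he : u a = w a) : u = w := by
  have key : w * u⁻¹ = 1 := by
    apply fixpoint_aux _ (u a)
    · show w (u⁻¹ (u a)) = u a
      rw [perm_inv_apply_self]
      exact he.symm
    · intro x y hx hy hxy
      have hux : u⁻¹ x ≠ a := fun h => hx (by rw [← h, perm_apply_inv_self])
      have huy : u⁻¹ y ≠ a := fun h => hy (by rw [← h, perm_apply_inv_self])
      show w (u⁻¹ x) < w (u⁻¹ y)
      rcases lt_trichotomy (u⁻¹ x) (u⁻¹ y) with hlt | heq | hgt
      · exact hw hux huy hlt
      · exact absurd (congrArg u heq) (by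
          rw [perm_apply_inv_self, perm_apply_inv_self]
          exact ne_of_lt hxy)
      · have := hu huy hux hgt
        rw [perm_apply_inv_self, perm_apply_inv_self] at this
        exact absurd hxy (not_lt.2 (le_of_lt this))
  exact (mul_inv_eq_one.1 key).symm

lemma Tw_one (a : Fin n) : Tw (1 : Perm (Fin n)) a := fun x y _ _ h => h

lemma Mw_symm {u v : Perm (Fin n)} {c : Fin n} (h : Mw u v c) : Mw v u c :=
  fun x y hx hy hxy => (h hx hy hxy).symm

lemma Tw_of_Mw {u v : Perm (Fin n)} {c : Fin n} (hu : Tw u c) (hm : Mw u v c) : Tw v c :=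
  fun x y hx hy hxy => (hm hx hy hxy).1 (hu hx hy hxy)

lemma exists_inversion {u : Perm (Fin n)} (hu : u ≠ 1) :
    ∃ x y : Fin n, x < y ∧ u y < u x := by
  by_contra hc
  push_neg at hc
  refine hu (eq_one_of_no_inversion u fun x y hxy => ?_)
  exact lt_of_le_of_ne (hc x y hxy) (fun h => (ne_of_lt hxy) (u.injective h))

lemma inv_touch {u : Perm (Fin n)} {a x y : Fin n} (hu : Tw u a)
    (hxy : x < y) (hinv : u y < u x) : x = a ∨ y = a := by
  by_contra hc
  push_neg at hc
  exact absurd (hu hc.1 hc.2 hxy) (not_lt.2 (le_of_lt hinv))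

lemma no_two_sided {u : Perm (Fin n)} {a x y : Fin n} (hu : Tw u a)
    (hx : x < a) (hy : a < y) (h1 : u a < u x) (h2 : u y < u a) : False := by
  have := hu (ne_of_lt hx) (ne_of_gt hy) (hx.trans hy)
  exact absurd (h2.trans h1) (not_lt.2 (le_of_lt this))

lemma closure_right {u : Perm (Fin n)} {a z y : Fin n} (hu : Tw u a)
    (h1 : a < z) (h2 : z ≤ y) (h3 : u y < u a) : u z < u a := by
  rcases eq_or_lt_of_le h2 with rfl | hlt
  · exact h3
  · exact (hu (ne_of_gt h1) (ne_of_gt (h1.trans hlt)) hlt).trans h3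

lemma closure_left {u : Perm (Fin n)} {a z y : Fin n} (hu : Tw u a)
    (h1 : y ≤ z) (h2 : z < a) (h3 : u a < u y) : u a < u z := by
  rcases eq_or_lt_of_le h1 with rfl | hlt
  · exact h3
  · exact h3.trans (hu (ne_of_lt (hlt.trans h2)) (ne_of_lt h2) hlt)

lemma Mw_inv {u v : Perm (Fin n)} {c x y : Fin n} (hm : Mw u v c)
    (hx : x ≠ c) (hy : y ≠ c) (hxy : x < y) : (u y < u x ↔ v y < v x) := by
  have hne : x ≠ y := ne_of_lt hxy
  have hu : u x ≠ u y := fun h => hne (u.injective h)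
  have hv : v x ≠ v y := fun h => hne (v.injective h)
  constructor
  · intro h
    refine lt_of_le_of_ne (not_lt.1 fun h2 => ?_) (Ne.symm hv)
    exact absurd ((hm hx hy hxy).2 h2) (not_lt.2 (le_of_lt h))
  · intro h
    refine lt_of_le_of_ne (not_lt.1 fun h2 => ?_) (Ne.symm hu)
    exact absurd ((hm hx hy hxy).1 h2) (not_lt.2 (le_of_lt h))

lemma eq_of_same_inversions {u w : Perm (Fin n)}
    (h : ∀ ⦃x y : Fin n⦄, x < y → (u y < u x ↔ w y < w x)) : u = w := by
  apply eq_of_same_order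
  intro x y hxy
  have hne : x ≠ y := ne_of_lt hxy
  have hu : u x ≠ u y := fun hh => hne (u.injective hh)
  have hw : w x ≠ w y := fun hh => hne (w.injective hh)
  constructor
  · intro hlt
    refine lt_of_le_of_ne (not_lt.1 fun h2 => ?_) hw
    exact absurd ((h hxy).2 h2) (not_lt.2 (le_of_lt hlt))
  · intro hlt
    refine lt_of_le_of_ne (not_lt.1 fun h2 => ?_) hu
    exact absurd ((h hxy).1 h2) (not_lt.2 (le_of_lt hlt))

/-- Structure of a "sporadic" pair. -/
lemma lemA {u v : Perm (Fin n)} {a b c : Fin n}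
    (hu : Tw u a) (hv : Tw v b) (hm : Mw u v c)
    (hdisj : ∀ d, Tw u d → Tw v d → False)
    (hab : a < b) :
    a < c ∧ c < b ∧ (∀ z, a < z → z < b → z = c) ∧
      (∀ ⦃x y : Fin n⦄, x < y → (u y < u x ↔ x = a ∧ (y = c ∨ y = b))) ∧
      (∀ ⦃x y : Fin n⦄, x < y → (v y < v x ↔ y = b ∧ (x = a ∨ x = c))) := by
  have hca : c ≠ a := by
    rintro rfl
    exact hdisj c hu (Tw_of_Mw hu hm)
  have hcb : c ≠ b := by
    rintro rfl
    exact hdisj c (Tw_of_Mw hv (Mw_symm hm)) hv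
  have hanb : a ≠ b := ne_of_lt hab
  -- Step A2 : u b < u a
  have hUab : u b < u a := by
    by_contra hnab
    -- every inversion of u is the pair {a,c}
    have hallc : ∀ ⦃x y : Fin n⦄, x < y → u y < u x → (x = a ∧ y = c) ∨ (x = c ∧ y = a) := by
      intro x y hxy hinv
      rcases inv_touch hu hxy hinv with rfl | rfl
      · -- x = a
        left
        refine ⟨rfl, ?_⟩
        by_contra hyc
        -- (x,y) not an inversion of v
        have hnv : ¬ (v y < v x) := by
          intro hinvv
          rcases inv_touch hv hxy hinvv with rfl | rfl
          · exact absurd hab (lt_irrefl _)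
          · exact hnab hinv
        exact hnv ((Mw_inv hm (Ne.symm hca) hyc hxy).1 hinv)
      · -- y = a
        right
        refine ⟨?_, rfl⟩
        by_contra hxc
        have hnv : ¬ (v y < v x) := by
          intro hinvv
          rcases inv_touch hv hxy hinvv with rfl | rfl
          · exact absurd (hxy.trans hab) (lt_irrefl _)
          · exact absurd hab (lt_irrefl _)
        exact hnv ((Mw_inv hm hxc (Ne.symm hca) hxy).1 hinv)
    have hTc : Tw u c := by
      intro x y hx hy hxy
      rcases lt_trichotomy (u x) (u y) with h | h | h
      · exact h
      · exact absurd (u.injective h) (ne_of_lt hxy)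
      · rcases hallc hxy h with ⟨_, rfl⟩ | ⟨rfl, _⟩
        · exact absurd rfl hy
        · exact absurd rfl hx
    exact hdisj c hTc (Tw_of_Mw hTc hm)
  have hVab : v b < v a := (Mw_inv hm (Ne.symm hca) (Ne.symm hcb) hab).1 hUab
  -- no left inversions of u, no right inversions of v
  have hNL : ∀ ⦃x : Fin n⦄, x < a → ¬ (u a < u x) := fun x hx h =>
    no_two_sided hu hx hab h hUab
  have hNR : ∀ ⦃y : Fin n⦄, b < y → ¬ (v y < v b) := fun y hy h =>
    no_two_sided hv hab hy hVab h
  -- everything strictly between a and b equals c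
  have hbetc : ∀ z, a < z → z < b → z = c := by
    intro z hz1 hz2
    have hinvz : u z < u a := closure_right hu hz1 (le_of_lt hz2) hUab
    by_contra hzc
    have hnv : ¬ (v z < v a) := by
      intro hinvv
      rcases inv_touch hv hz1 hinvv with rfl | rfl
      · exact absurd hab (lt_irrefl _)
      · exact absurd hz2 (lt_irrefl _)
    exact hnv ((Mw_inv hm (Ne.symm hca) hzc hz1).1 hinvz)
  -- a < c and c < b
  have hacb : a < c ∧ c < b := by
    by_contra hnotbet
    -- classification of inversions of u when c is not strictly between a and b
    have hclass : ∀ ⦃x y : Fin n⦄, x < y → u y < u x →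
        (x = a ∧ y = b) ∨ (x = a ∧ y = c) ∨ (x = c ∧ y = a) := by
      intro x y hxy hinv
      rcases inv_touch hu hxy hinv with rfl | rfl
      · by_cases hyb : y = b
        · exact Or.inl ⟨rfl, hyb⟩
        · refine Or.inr (Or.inl ⟨rfl, ?_⟩)
          by_contra hyc
          have hnv : ¬ (v y < v x) := by
            intro hinvv
            rcases inv_touch hv hxy hinvv with rfl | rfl
            · exact absurd hab (lt_irrefl _)
            · exact hyb rfl
          exact hnv ((Mw_inv hm (Ne.symm hca) hyc hxy).1 hinv)
      · refine Or.inr (Or.inr ⟨?_, rfl⟩)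
        by_contra hxc
        have hnv : ¬ (v y < v x) := by
          intro hinvv
          rcases inv_touch hv hxy hinvv with rfl | rfl
          · exact absurd (hxy.trans hab) (lt_irrefl _)
          · exact absurd hab (lt_irrefl _)
        exact hnv ((Mw_inv hm hxc (Ne.symm hca) hxy).1 hinv)
    rcases lt_trichotomy c a with hclta | hceqa | hcgta
    · -- c < a
      by_cases hca2 : u a < u c
      · exact no_two_sided hu hclta hab hca2 hUab
      · -- all inversions of u are (a,b); so Tw u b
        have hTub : Tw u b := by
          intro x y hx hy hxy
          rcases lt_trichotomy (u x) (u y) with h | h | h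
          · exact h
          · exact absurd (u.injective h) (ne_of_lt hxy)
          · rcases hclass hxy h with ⟨rfl, rfl⟩ | ⟨rfl, rfl⟩ | ⟨rfl, rfl⟩
            · exact absurd rfl hy
            · exact absurd hxy (not_lt.2 (le_of_lt hclta))
            · exact absurd h hca2
        exact hdisj b hTub hv
    · exact hca hceqa
    · -- a < c ; since not between, b < c (using hnotbet) or c = b
      have hbc : b < c := by
        rcases lt_trichotomy c b with h | h | h
        · exact absurd ⟨hcgta, h⟩ hnotbet
        · exact absurd h hcb
        · exact h
      by_cases hac2 : u c < u a
      · -- (a,c) inversion; classify v's inversions: all are (a,b); Tw v a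
        have hTva : Tw v a := by
          intro x y hx hy hxy
          rcases lt_trichotomy (v x) (v y) with h | h | h
          · exact h
          · exact absurd (v.injective h) (ne_of_lt hxy)
          · -- inversion of v
            exfalso
            rcases inv_touch hv hxy h with rfl | rfl
            · -- x = b : right inversion of v, impossible
              exact absurd h (hNR hxy)
            · -- y = b
              by_cases hxa : x = a
              · exact absurd hxa hx
              · -- (x,b) not in inv u, so x = c; but c > b contradiction
                have hnu : ¬ (u y < u x) := by
                  intro hinvu
                  rcases hclass hxy hinvu with ⟨rfl, _⟩ | ⟨rfl, _⟩ | ⟨rfl, rfl⟩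
                  · exact hxa rfl
                  · exact hxa rfl
                  · exact absurd (hbc.trans hxy) (lt_irrefl _)
                have hxcne : x ≠ c := fun hh => absurd (hh ▸ hxy) (not_lt.2 (le_of_lt hbc))
                exact hnu ((Mw_inv hm hxcne (Ne.symm hcb) hxy).2 h)

        exact hdisj a hu hTva
      · -- no (a,c) inversion: all inversions of u are (a,b); Tw u b
        have hTub : Tw u b := by
          intro x y hx hy hxy
          rcases lt_trichotomy (u x) (u y) with h | h | h
          · exact h
          · exact absurd (u.injective h) (ne_of_lt hxy)
          · rcases hclass hxy h with ⟨rfl, rfl⟩ | ⟨rfl, rfl⟩ | ⟨rfl, rfl⟩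
            · exact absurd rfl hy
            · exact absurd h hac2
            · exact absurd (hcgta.trans hxy) (lt_irrefl _)
        exact hdisj b hTub hv
  obtain ⟨hac, hcb'⟩ := hacb
  refine ⟨hac, hcb', hbetc, ?_, ?_⟩
  · -- inversions of u
    intro x y hxy
    constructor
    · intro hinv
      rcases inv_touch hu hxy hinv with rfl | rfl
      · refine ⟨rfl, ?_⟩
        by_cases hyc : y = c
        · exact Or.inl hyc
        by_cases hyb : y = b
        · exact Or.inr hyb
        exfalso
        have hnv : ¬ (v y < v x) := by
          intro hinvv
          rcases inv_touch hv hxy hinvv with rfl | rfl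
          · exact absurd hab (lt_irrefl _)
          · exact hyb rfl
        exact hnv ((Mw_inv hm (Ne.symm hca) hyc hxy).1 hinv)
      · exact absurd hinv (hNL hxy)
    · rintro ⟨rfl, rfl | rfl⟩
      · exact closure_right hu hac (le_of_lt hcb') hUab
      · exact hUab
  · -- inversions of v
    intro x y hxy
    constructor
    · intro hinv
      rcases inv_touch hv hxy hinv with rfl | rfl
      · exact absurd hinv (hNR hxy)
      · refine ⟨rfl, ?_⟩
        by_cases hxa : x = a
        · exact Or.inl hxa
        by_cases hxc : x = c
        · exact Or.inr hxc
        exfalso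
        have hnu : ¬ (u y < u x) := by
          intro hinvu
          rcases inv_touch hu hxy hinvu with rfl | rfl
          · exact hxa rfl
          · exact absurd hab (lt_irrefl _)
        exact hnu ((Mw_inv hm hxc (Ne.symm hcb) hxy).2 hinv)
    · rintro ⟨rfl, rfl | rfl⟩
      · exact hVab
      · exact closure_left hv (le_of_lt hac) hcb' hVab

/-- No fourth element can join a sporadic triple. -/
lemma lemB {u v w : Perm (Fin n)} {a b c c₁ c₂ e : Fin n}
    (hac : a < c) (hcb : c < b)
    (hIU : ∀ ⦃x y : Fin n⦄, x < y → (u y < u x ↔ x = a ∧ (y = c ∨ y = b)))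
    (hIV : ∀ ⦃x y : Fin n⦄, x < y → (v y < v x ↔ y = b ∧ (x = a ∨ x = c)))
    (hw : Tw w e) (hw1 : w ≠ 1) (hm1 : Mw w u c₁) (hm2 : Mw w v c₂) :
    w = u ∨ w = v := by
  have hab : a < b := hac.trans hcb
  have hanb : a ≠ b := ne_of_lt hab
  have hanc : a ≠ c := ne_of_lt hac
  have hcnb : c ≠ b := ne_of_lt hcb
  have hUab : u b < u a := (hIU hab).2 ⟨rfl, Or.inr rfl⟩
  have hUac : u c < u a := (hIU hac).2 ⟨rfl, Or.inl rfl⟩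
  have hVab : v b < v a := (hIV hab).2 ⟨rfl, Or.inl rfl⟩
  have hVcb : v b < v c := (hIV hcb).2 ⟨rfl, Or.inr rfl⟩
  by_cases hwab : w b < w a
  · -- (a,b) is an inversion of w, so e ∈ {a, b}
    rcases inv_touch hw hab hwab with he | he
    · -- a = e
      rw [← he] at hw
      left
      have hwac : w c < w a := closure_right hw hac (le_of_lt hcb) hwab
      have hwcb : ¬ (w b < w c) := by
        intro h
        rcases inv_touch hw hcb h with h' | h'
        · exact hanc h'.symm
        · exact hanb h'.symm
      have hc2 : c₂ = c := by
        have h1 : c = c₂ ∨ b = c₂ := by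
          by_contra hcon
          push_neg at hcon
          exact hwcb ((Mw_inv hm2 hcon.1 hcon.2 hcb).2 hVcb)
        have h2 : a = c₂ ∨ c = c₂ := by
          by_contra hcon
          push_neg at hcon
          have := (Mw_inv hm2 hcon.1 hcon.2 hac).1 hwac
          rw [hIV hac] at this
          exact hcnb this.1
        rcases h1 with h1 | h1
        · exact h1.symm
        · rcases h2 with h2 | h2
          · exact absurd (h2.trans h1.symm) hanb
          · exact h2.symm
      rw [hc2] at hm2
      apply eq_of_same_inversions
      intro x y hxy
      rw [hIU hxy]
      constructor
      · intro hinv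
        rcases inv_touch hw hxy hinv with hxa | hya
        · refine ⟨hxa, ?_⟩
          by_cases hyc : y = c
          · exact Or.inl hyc
          by_cases hyb : y = b
          · exact Or.inr hyb
          exfalso
          rw [hxa] at hinv hxy
          have := (Mw_inv hm2 hanc hyc hxy).1 hinv
          rw [hIV hxy] at this
          exact hyb this.1
        · rw [hya] at hinv hxy
          exact (no_two_sided hw hxy hab hinv hwab).elim
      · rintro ⟨hxa, hy | hy⟩
        · rw [hxa, hy]; exact hwac
        · rw [hxa, hy]; exact hwab
    · -- b = e
      rw [← he] at hw
      right
      have hwcb : w b < w c := closure_left hw (le_of_lt hac) hcb hwab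
      have hwac : ¬ (w c < w a) := by
        intro h
        rcases inv_touch hw hac h with h' | h'
        · exact hanb h'
        · exact hcnb h'
      have hc1 : c₁ = c := by
        have h1 : a = c₁ ∨ c = c₁ := by
          by_contra hcon
          push_neg at hcon
          exact hwac ((Mw_inv hm1 hcon.1 hcon.2 hac).2 hUac)
        have h2 : c = c₁ ∨ b = c₁ := by
          by_contra hcon
          push_neg at hcon
          have := (Mw_inv hm1 hcon.1 hcon.2 hcb).1 hwcb
          rw [hIU hcb] at this
          exact hanc this.1.symm
        rcases h2 with h2 | h2
        · exact h2.symm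
        · rcases h1 with h1 | h1
          · exact absurd (h1.trans h2.symm) hanb
          · exact absurd (h1.trans h2.symm) hcnb
      rw [hc1] at hm1
      apply eq_of_same_inversions
      intro x y hxy
      rw [hIV hxy]
      constructor
      · intro hinv
        rcases inv_touch hw hxy hinv with hxb | hyb
        · rw [hxb] at hinv hxy
          exact (no_two_sided hw hab hxy hwab hinv).elim
        · refine ⟨hyb, ?_⟩
          by_cases hxa : x = a
          · exact Or.inl hxa
          by_cases hxc : x = c
          · exact Or.inr hxc
          exfalso
          rw [hyb] at hinv hxy
          have := (Mw_inv hm1 hxc (Ne.symm hcnb) hxy).1 hinv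
          rw [hIU hxy] at this
          exact hxa this.1
      · rintro ⟨hyb, hx | hx⟩
        · rw [hyb, hx]; exact hwab
        · rw [hyb, hx]; exact hwcb
  · -- (a,b) not an inversion of w : derive a contradiction
    exfalso
    have hc1ab : c₁ = a ∨ c₁ = b := by
      by_contra hcon
      push_neg at hcon
      exact hwab ((Mw_inv hm1 (Ne.symm hcon.1) (Ne.symm hcon.2) hab).2 hUab)
    have hc2ab : c₂ = a ∨ c₂ = b := by
      by_contra hcon
      push_neg at hcon
      exact hwab ((Mw_inv hm2 (Ne.symm hcon.1) (Ne.symm hcon.2) hab).2 hVab)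
    rcases hc1ab with hc1 | hc1 <;> rw [hc1] at hm1
    · rcases hc2ab with hc2 | hc2 <;> rw [hc2] at hm2
      · -- c₁ = c₂ = a : pair (c,b) avoids a
        have h1 : w b < w c := (Mw_inv hm2 (Ne.symm hanc) (Ne.symm hanb) hcb).2 hVcb
        have h2 := (Mw_inv hm1 (Ne.symm hanc) (Ne.symm hanb) hcb).1 h1
        rw [hIU hcb] at h2
        exact hanc h2.1.symm
      · -- c₁ = a, c₂ = b
        obtain ⟨x, y, hxy, hinv⟩ := exists_inversion hw1
        have hxa : x = a := by
          by_contra hxa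
          by_cases hya : y = a
          · -- (x, a) inversion, x < a; pair avoids c₂ = b
            rw [hya] at hinv hxy
            have hxb : x ≠ b := fun h => absurd (h ▸ hxy) (not_lt.2 (le_of_lt hab))
            have := (Mw_inv hm2 hxb hanb hxy).1 hinv
            rw [hIV hxy] at this
            exact hanb this.1
          · -- x,y ≠ a: pair avoids c₁ = a: status = inv u: needs x = a
            have := (Mw_inv hm1 hxa hya hxy).1 hinv
            rw [hIU hxy] at this
            exact hxa this.1
        rw [hxa] at hinv hxy
        by_cases hyb : y = b
        · exact hwab (hyb ▸ hinv)
        · have := (Mw_inv hm2 hanb hyb hxy).1 hinv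
          rw [hIV hxy] at this
          exact hyb this.1
    · rcases hc2ab with hc2 | hc2 <;> rw [hc2] at hm2
      · -- c₁ = b, c₂ = a
        have h1 : w c < w a := (Mw_inv hm1 hanb hcnb hac).2 hUac
        have h2 : w b < w c := (Mw_inv hm2 (Ne.symm hanc) (Ne.symm hanb) hcb).2 hVcb
        exact hwab (h2.trans h1)
      · -- c₁ = c₂ = b : pair (a,c) avoids b
        have h1 : w c < w a := (Mw_inv hm1 hanb hcnb hac).2 hUac
        have h2 := (Mw_inv hm2 hanb hcnb hac).1 h1
        rw [hIV hac] at h2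
        exact hcnb h2.1

lemma pair_sublist_ofFn (β : Perm (Fin n)) {x y : Fin n} (h : β⁻¹ x < β⁻¹ y) :
    List.Sublist [x, y] (List.ofFn (fun i => β i)) := by
  have hl : (List.ofFn (fun i => β i)).length = n := List.length_ofFn
  set l := List.ofFn (fun i => β i) with hldef
  let i : Fin l.length := ⟨(β⁻¹ x : Fin n), by rw [hl]; exact (β⁻¹ x).2⟩
  let j : Fin l.length := ⟨(β⁻¹ y : Fin n), by rw [hl]; exact (β⁻¹ y).2⟩
  have hij : List.Pairwise (· < ·) [i, j] := by
    simp [i, j, List.pairwise_cons]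
    exact h
  have hsub := List.map_getElem_sublist hij
  have hx : l[((β⁻¹ x : Fin n) : ℕ)]'(by simp [hldef]) = x := by
    simp only [hldef, List.getElem_ofFn]
    simp
  have hy : l[((β⁻¹ y : Fin n) : ℕ)]'(by simp [hldef]) = y := by
    simp only [hldef, List.getElem_ofFn]
    simp
  simpa [i, j, hldef] using hsub

lemma sorted_del (β : Perm (Fin n)) (A : Finset (Fin n)) :
    (ulamDel β A).Pairwise (fun x y => β⁻¹ x < β⁻¹ y) := by
  apply List.Pairwise.filter
  rw [List.pairwise_ofFn]
  intro i j hij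
  simpa using hij

lemma del_perm (β γ : Perm (Fin n)) (A : Finset (Fin n)) :
    List.Perm (ulamDel β A) (ulamDel γ A) := by
  apply List.Perm.filter
  apply List.perm_of_nodup_nodup_toFinset_eq
  · exact List.nodup_ofFn.2 β.injective
  · exact List.nodup_ofFn.2 γ.injective
  · ext z
    simp [List.mem_ofFn]
    exact ⟨fun _ => ⟨γ.symm z, by simp⟩, fun _ => ⟨β.symm z, by simp⟩⟩

/-- The key bridge: equality of deleted strings = agreement of relative orders. -/
lemma ulamDel_eq_iff (β γ : Perm (Fin n)) (A : Finset (Fin n)) :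
    ulamDel β A = ulamDel γ A ↔
      ∀ ⦃x y : Fin n⦄, x ∉ A → y ∉ A → x < y → (β⁻¹ x < β⁻¹ y ↔ γ⁻¹ x < γ⁻¹ y) := by
  constructor
  · intro h x y hx hy hxy
    have key : ∀ (σ τ : Perm (Fin n)), ulamDel σ A = ulamDel τ A →
        σ⁻¹ x < σ⁻¹ y → τ⁻¹ x < τ⁻¹ y := by
      intro σ τ heq hlt
      have hsub : List.Sublist [x, y] (ulamDel σ A) := by
        have h1 : List.Sublist [x, y] (List.ofFn (fun i => σ i)) := pair_sublist_ofFn σ hlt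
        have h2 := List.Sublist.filter (fun z => decide (z ∉ A)) h1
        have h3 : List.filter (fun z => decide (z ∉ A)) [x, y] = [x, y] := by
          simp [List.filter, hx, hy]
        rwa [h3] at h2
      rw [heq] at hsub
      have := List.pairwise_iff_forall_sublist.1 (sorted_del τ A) hsub
      exact this
    constructor
    · intro hlt
      exact key β γ h hlt
    · intro hlt
      exact key γ β h.symm hlt
  · intro h
    set r : Fin n → Fin n → Prop := fun x y => γ⁻¹ x < γ⁻¹ y with hr
    haveI : IsAntisymm (Fin n) r := ⟨fun x y h1 h2 => absurd h1 (not_lt.2 (le_of_lt h2))⟩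
    apply List.Perm.eq_of_pairwise (le := r) (fun a b _ _ h1 h2 => absurd h1 (not_lt.2 (le_of_lt h2))) ?_ ?_ (del_perm β γ A)
    · -- ulamDel β A is sorted wrt r
      show (ulamDel β A).Pairwise r
      have hpw : (List.ofFn fun i => β i).Pairwise
          (fun x y => x ∉ A → y ∉ A → r x y) := by
        rw [List.pairwise_ofFn]
        intro i j hij hxA hyA
        have hne : β i ≠ β j := fun hh => (ne_of_lt hij) (β.injective hh)
        rcases lt_trichotomy (β i) (β j) with hlt | heq | hgt
        · have := (h hxA hyA hlt).1 (by simp [hij])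
          exact this
        · exact absurd heq hne
        · have hiff := h hyA hxA hgt
          have hnot : ¬ (β⁻¹ (β j) < β⁻¹ (β i)) := by
            simpa using not_lt.2 (le_of_lt hij)
          have hnotg := mt hiff.2 hnot
          refine lt_of_le_of_ne (not_lt.1 hnotg) ?_
          exact fun hh => hne (by simpa using congrArg γ hh)
      have := List.Pairwise.filter (fun z => decide (z ∉ A)) hpw
      refine this.imp_of_mem ?_
      intro p q hp hq hpq
      rw [List.mem_filter] at hp hq
      exact hpq (by simpa using hp.2) (by simpa using hq.2)
    · exact sorted_del γ A

lemma distSet_nonempty (β γ : Perm (Fin n)) :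
    {m | ∃ A : Finset (Fin n), A.card = m ∧ ulamDel β A = ulamDel γ A}.Nonempty := by
  refine ⟨(Finset.univ : Finset (Fin n)).card, Finset.univ, rfl, ?_⟩
  simp [ulamDel]

lemma dist_le_one_cases {β γ : Perm (Fin n)} (hd : ulamDist β γ ≤ 1) :
    β = γ ∨ ∃ c, Mw β⁻¹ γ⁻¹ c := by
  have hmem := Nat.sInf_mem (distSet_nonempty β γ)
  obtain ⟨A, hA, heq⟩ := hmem
  have hd' : A.card ≤ 1 := by rw [hA]; exact hd
  rcases Nat.le_one_iff_eq_zero_or_eq_one.1 hd' with h | h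
  · left
    have hA0 : A = ∅ := Finset.card_eq_zero.1 h
    subst hA0
    have : List.ofFn (fun i => β i) = List.ofFn (fun i => γ i) := by
      simpa [ulamDel] using heq
    have hfg := List.ofFn_inj.1 this
    ext x
    exact congrArg Fin.val (congrFun hfg x)
  · right
    obtain ⟨c, rfl⟩ := Finset.card_eq_one.1 h
    refine ⟨c, ?_⟩
    rw [ulamDel_eq_iff] at heq
    intro x y hx hy hxy
    exact heq (by simp [hx]) (by simp [hy]) hxy

lemma dist_le_one_of_Mw {β γ : Perm (Fin n)} {c : Fin n} (h : Mw β⁻¹ γ⁻¹ c) :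
    ulamDist β γ ≤ 1 := by
  apply Nat.sInf_le
  refine ⟨{c}, Finset.card_singleton c, ?_⟩
  rw [ulamDel_eq_iff]
  intro x y hx hy hxy
  exact h (by simpa using hx) (by simpa using hy) hxy

lemma dist_mul_le (σ β γ : Perm (Fin n)) :
    ulamDist (σ * β) (σ * γ) ≤ ulamDist β γ := by
  obtain ⟨A, hA, heq⟩ := Nat.sInf_mem (distSet_nonempty β γ)
  have key : ulamDist (σ * β) (σ * γ) ≤ A.card := by
    apply Nat.sInf_le
    refine ⟨A.image σ, Finset.card_image_of_injective _ σ.injective, ?_⟩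
    rw [ulamDel_eq_iff] at heq ⊢
    intro x y hx hy hxy
    have hx' : σ⁻¹ x ∉ A := fun h => hx (Finset.mem_image.2 ⟨_, h, by simp⟩)
    have hy' : σ⁻¹ y ∉ A := fun h => hy (Finset.mem_image.2 ⟨_, h, by simp⟩)
    have hrw : ∀ (δ : Perm (Fin n)) (z : Fin n), (σ * δ)⁻¹ z = δ⁻¹ (σ⁻¹ z) := by
      intro δ z
      simp [mul_inv_rev, Equiv.Perm.mul_apply]
    rw [hrw β x, hrw β y, hrw γ x, hrw γ y]
    have hne : σ⁻¹ x ≠ σ⁻¹ y := fun h => (ne_of_lt hxy) (by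
      have := congrArg σ h
      simpa using this)
    rcases lt_trichotomy (σ⁻¹ x) (σ⁻¹ y) with hlt | he | hgt
    · exact heq hx' hy' hlt
    · exact absurd he hne
    · have hiff := heq hy' hx' hgt
      constructor
      · intro hl
        have hnb : ¬ (β⁻¹ (σ⁻¹ y) < β⁻¹ (σ⁻¹ x)) := not_lt.2 (le_of_lt hl)
        have hng := mt hiff.2 hnb
        refine lt_of_le_of_ne (not_lt.1 hng) fun hh => hne (γ⁻¹.injective hh)
      · intro hl
        have hnb : ¬ (γ⁻¹ (σ⁻¹ y) < γ⁻¹ (σ⁻¹ x)) := not_lt.2 (le_of_lt hl)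
        have hng := mt hiff.1 hnb
        refine lt_of_le_of_ne (not_lt.1 hng) fun hh => hne (β⁻¹.injective hh)
  exact key.trans (le_of_eq hA)

/-- Two witnesses of a non-identity permutation have nothing strictly between them. -/
lemma Tw_pair {u : Perm (Fin n)} {p r : Fin n} (hu1 : u ≠ 1) (hp : Tw u p) (hr : Tw u r)
    (hpr : p < r) : ∀ z, p < z → z < r → False := by
  obtain ⟨x, y, hxy, hinv⟩ := exists_inversion hu1
  have hinvpr : u r < u p := by
    rcases inv_touch hp hxy hinv with hxp | hyp
    · rcases inv_touch hr hxy hinv with hxr | hyr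
      · exact absurd (hxp ▸ hxr : p = r) (ne_of_lt hpr)
      · rw [hxp, hyr] at hinv; exact hinv
    · rcases inv_touch hr hxy hinv with hxr | hyr
      · rw [hyp, hxr] at hxy
        exact absurd (hxy.trans hpr) (lt_irrefl _)
      · exact absurd (hyp ▸ hyr : p = r) (ne_of_lt hpr)
  intro z hpz hzr
  have hinvz : u z < u p := closure_right hp hpz (le_of_lt hzr) hinvpr
  rcases inv_touch hr hpz hinvz with h | h
  · exact (ne_of_lt hpr) h
  · exact (ne_of_lt hzr) h

open scoped Classical in
/-- Upper bound for a normalized family containing the identity. -/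
lemma card_le_of_one_mem (hn : 1 ≤ n) (G : Finset (Perm (Fin n)))
    (h1 : (1 : Perm (Fin n)) ∈ G)
    (hp : ∀ β ∈ G, ∀ γ ∈ G, ulamDist β γ ≤ 1) : G.card ≤ n := by
  have wit : ∀ β ∈ G, ∃ a, Tw β⁻¹ a := by
    intro β hβ
    rcases dist_le_one_cases (hp β hβ 1 h1) with rfl | ⟨c, hm⟩
    · exact ⟨⟨0, hn⟩, by rw [inv_one]; exact Tw_one _⟩
    · refine ⟨c, ?_⟩
      rw [inv_one] at hm
      exact Tw_of_Mw (Tw_one c) (Mw_symm hm)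
  have pairMw : ∀ β ∈ G, ∀ γ ∈ G, β = γ ∨ ∃ c, Mw β⁻¹ γ⁻¹ c := fun β hβ γ hγ =>
    dist_le_one_cases (hp β hβ γ hγ)
  by_cases hcom : ∃ d, ∀ β ∈ G, Tw β⁻¹ d
  · obtain ⟨d, hd⟩ := hcom
    have key : G.card ≤ (Finset.univ : Finset (Fin n)).card := by
      apply Finset.card_le_card_of_injOn (fun β : Perm (Fin n) => β⁻¹ d)
        (fun β _ => Finset.mem_univ _)
      intro β hβ γ hγ he
      have := T_inj (hd β hβ) (hd γ hγ) he
      exact inv_injective this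
    simpa using key
  · push_neg at hcom
    -- pick β₀ with maximal minimal witness
    have hWne : ∀ β ∈ G, (Finset.univ.filter (fun a => Tw β⁻¹ a)).Nonempty := by
      intro β hβ
      obtain ⟨a, ha⟩ := wit β hβ
      exact ⟨a, by simp [ha]⟩
    obtain ⟨β', hβ'G, hβ'⟩ := hcom ⟨0, hn⟩
    have hG'ne : (G.erase 1).Nonempty := by
      refine ⟨β', Finset.mem_erase.2 ⟨?_, hβ'G⟩⟩
      rintro rfl
      exact hβ' (by rw [inv_one]; exact Tw_one _)
    obtain ⟨β₀, hβ₀G', hmax⟩ := Finset.exists_max_image (G.erase 1)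
      (fun β => if h : β ∈ G then (Finset.univ.filter (fun a => Tw β⁻¹ a)).min' (hWne β h)
        else ⟨0, hn⟩) hG'ne
    have hβ₀G : β₀ ∈ G := Finset.mem_of_mem_erase hβ₀G'
    set d := (Finset.univ.filter (fun a => Tw β₀⁻¹ a)).min' (hWne β₀ hβ₀G) with hddef
    have hTd : Tw β₀⁻¹ d := by
      have := Finset.min'_mem (Finset.univ.filter (fun a => Tw β₀⁻¹ a)) (hWne β₀ hβ₀G)
      rw [← hddef] at this
      exact (Finset.mem_filter.1 this).2
    obtain ⟨γ, hγG, hγd⟩ := hcom d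
    have hγ1 : γ ≠ 1 := by
      rintro rfl
      exact hγd (by rw [inv_one]; exact Tw_one _)
    have hγG' : γ ∈ G.erase 1 := Finset.mem_erase.2 ⟨hγ1, hγG⟩
    set b := (Finset.univ.filter (fun a => Tw γ⁻¹ a)).min' (hWne γ hγG) with hbdef
    have hTb : Tw γ⁻¹ b := by
      have := Finset.min'_mem (Finset.univ.filter (fun a => Tw γ⁻¹ a)) (hWne γ hγG)
      rw [← hbdef] at this
      exact (Finset.mem_filter.1 this).2
    have hβ₀1 : β₀ ≠ 1 := (Finset.mem_erase.1 hβ₀G').1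
    have hu1 : β₀⁻¹ ≠ 1 := fun h => hβ₀1 (inv_eq_one.1 h)
    have hv1 : γ⁻¹ ≠ 1 := fun h => hγ1 (inv_eq_one.1 h)
    have hbd : b ≤ d := by
      have := hmax γ hγG'
      simp only [dif_pos hγG, dif_pos hβ₀G] at this
      rw [← hbdef, ← hddef] at this
      exact this
    have hbltd : b < d := lt_of_le_of_ne hbd (fun h => hγd (h ▸ hTb))
    -- disjointness of witness sets
    have hdisj : ∀ e, Tw γ⁻¹ e → Tw β₀⁻¹ e → False := by
      intro e hve hue
      have hde : d ≤ e := by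
        apply Finset.min'_le
        simp [hue]
      have hdne : d ≠ e := fun h => hγd (h ▸ hve)
      exact Tw_pair hv1 hTb hve (hbltd.trans (lt_of_le_of_ne hde hdne)) d hbltd
        (lt_of_le_of_ne hde hdne)
    have hβ₀γ : β₀ ≠ γ := fun h => hγd (h ▸ hTd)
    obtain ⟨c, hmc⟩ : ∃ c, Mw γ⁻¹ β₀⁻¹ c := by
      rcases pairMw γ hγG β₀ hβ₀G with h | h
      · exact absurd h.symm hβ₀γ
      · exact h
    obtain ⟨hbc, hcd, hbet, hIU, hIV⟩ := lemA hTb hTd hmc hdisj hbltd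
    -- G is contained in {1, γ, β₀}
    have hsub : G ⊆ {1, γ, β₀} := by
      intro δ hδG
      simp only [Finset.mem_insert, Finset.mem_singleton]
      by_cases hδ1 : δ = 1
      · exact Or.inl hδ1
      right
      obtain ⟨e, he⟩ := wit δ hδG
      have hw1 : δ⁻¹ ≠ 1 := fun h => hδ1 (inv_eq_one.1 h)
      have hm1 : δ = γ ∨ ∃ c₁, Mw δ⁻¹ γ⁻¹ c₁ := pairMw δ hδG γ hγG
      have hm2 : δ = β₀ ∨ ∃ c₂, Mw δ⁻¹ β₀⁻¹ c₂ := pairMw δ hδG β₀ hβ₀G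
      rcases hm1 with rfl | ⟨c₁, hc1⟩
      · exact Or.inl rfl
      rcases hm2 with rfl | ⟨c₂, hc2⟩
      · exact Or.inr rfl
      rcases lemB hbc hcd hIU hIV he hw1 hc1 hc2 with h | h
      · exact Or.inl (inv_injective h)
      · exact Or.inr (inv_injective h)
    have h3n : 3 ≤ n := by
      have h1 : (b : ℕ) < (c : ℕ) := hbc
      have h2 : (c : ℕ) < (d : ℕ) := hcd
      have h3 := d.2
      omega
    calc G.card ≤ ({1, γ, β₀} : Finset (Perm (Fin n))).card := Finset.card_le_card hsub
      _ ≤ 3 := by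
          apply le_trans (Finset.card_insert_le _ _)
          have := Finset.card_insert_le (γ) ({β₀} : Finset (Perm (Fin n)))
          simp at this ⊢
          omega
      _ ≤ n := h3n

/-- Part 2 : the upper bound. -/
lemma upper_bound (hn : 1 ≤ n) (F : Finset (Perm (Fin n)))
    (hp : ∀ α ∈ F, ∀ β ∈ F, ulamDist α β ≤ 1) : F.card ≤ n := by
  rcases F.eq_empty_or_nonempty with rfl | ⟨α₀, hα₀⟩
  · simp
  have hinj : Function.Injective (fun β => α₀⁻¹ * β : Perm (Fin n) → Perm (Fin n)) :=
    mul_right_injective _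
  set G := F.image (fun β => α₀⁻¹ * β) with hGdef
  have hcard : G.card = F.card := Finset.card_image_of_injective _ hinj
  have h1G : (1 : Perm (Fin n)) ∈ G := Finset.mem_image.2 ⟨α₀, hα₀, by simp⟩
  have hpG : ∀ β ∈ G, ∀ γ ∈ G, ulamDist β γ ≤ 1 := by
    intro β hβ γ hγ
    obtain ⟨β', hβ', rfl⟩ := Finset.mem_image.1 hβ
    obtain ⟨γ', hγ', rfl⟩ := Finset.mem_image.1 hγ
    exact le_trans (dist_mul_le α₀⁻¹ β' γ') (hp β' hβ' γ' hγ')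
  rw [← hcard]
  exact card_le_of_one_mem hn G h1G hpG

/-- Part 3 : the construction. -/
lemma construction (hn : 1 ≤ n) :
    ∃ F : Finset (Perm (Fin n)),
      (∀ α ∈ F, ∀ β ∈ F, ulamDist α β ≤ 1) ∧ F.card = n := by
  obtain ⟨m, rfl⟩ : ∃ m, n = m + 1 := ⟨n - 1, by omega⟩
  have htw : ∀ p : Fin (m + 1), Tw (Fin.cycleRange p)⁻¹ 0 := by
    intro p x y hx hy hxy
    show (Fin.cycleRange p).symm x < (Fin.cycleRange p).symm y
    have hxs : ((x.pred hx).succ : Fin (m + 1)) = x := Fin.succ_pred x hx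
    have hys : ((y.pred hy).succ : Fin (m + 1)) = y := Fin.succ_pred y hy
    rw [← hxs, ← hys, Fin.cycleRange_symm_succ, Fin.cycleRange_symm_succ]
    apply Fin.strictMono_succAbove
    rw [Fin.pred_lt_pred_iff]
    exact hxy
  refine ⟨Finset.univ.image (fun p : Fin (m + 1) => Fin.cycleRange p), ?_, ?_⟩
  · intro α hα β hβ
    obtain ⟨p, _, rfl⟩ := Finset.mem_image.1 hα
    obtain ⟨q, _, rfl⟩ := Finset.mem_image.1 hβ
    apply dist_le_one_of_Mw (c := 0)
    intro x y hx hy hxy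
    exact iff_of_true (htw p hx hy hxy) (htw q hx hy hxy)
  · rw [Finset.card_image_of_injective, Finset.card_univ, Fintype.card_fin]
    intro p q h
    have := congrArg (fun e : Perm (Fin (m + 1)) => e.symm 0) h
    simpa [Fin.cycleRange_symm_zero] using this

end UlamAux

theorem maxDiamFamily_one (n : ℕ) (hn : 1 ≤ n) :
    maxDiamFamily n 1 = n ∧
      (∀ F : Finset (Equiv.Perm (Fin n)),
          (∀ α ∈ F, ∀ β ∈ F, ulamDist α β ≤ 1) → F.card ≤ n) ∧
      (∃ F : Finset (Equiv.Perm (Fin n)),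
          (∀ α ∈ F, ∀ β ∈ F, ulamDist α β ≤ 1) ∧ F.card = n) := by
  obtain ⟨F₀, hF₀p, hF₀c⟩ := UlamAux.construction (n := n) hn
  refine ⟨?_, fun F hF => UlamAux.upper_bound hn F hF, ⟨F₀, hF₀p, hF₀c⟩⟩
  have hnS : n ∈ {m | ∃ F : Finset (Equiv.Perm (Fin n)), F.card = m ∧
      ∀ α ∈ F, ∀ β ∈ F, ulamDist α β ≤ 1} := ⟨F₀, hF₀c, hF₀p⟩
  have hub : ∀ m ∈ {m | ∃ F : Finset (Equiv.Perm (Fin n)), F.card = m ∧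
      ∀ α ∈ F, ∀ β ∈ F, ulamDist α β ≤ 1}, m ≤ n := by
    rintro m ⟨F, rfl, hF⟩
    exact UlamAux.upper_bound hn F hF
  exact le_antisymm (csSup_le ⟨n, hnS⟩ hub) (le_csSup ⟨n, hub⟩ hnS)
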